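/- Let P = e_1…e_k be a path with k ≥ 2 arcs, all of whose arc gains lie in [−B, B]. Then P is a funnel if and only if both of the following hold: (1) every arc gain is nonzero and the signs alternate, i.e., sign(g(e_i)) = (−1)^{i+1}·sign(g(e_1)) for every 1 ≤ i ≤ k; and (2) either P is first-arc-bounded and |g(e_1)| ≥ |g(e_2)| > |g(e_3)| > … > |g(e_k)| > 0, or P is last-arc-bounded and |g(e_k)| ≥ |g(e_{k−1})| > … > |g(e_1)| > 0 (only the first inequality in each chain is weak). -/
import Mathlib


open Finset

namespace EV

noncomputable section

/-- Charge after traversing `i` arcs of a path with arc gains `g`, battery capacity `B`,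
initial charge `b`. -/
def charge (B b : ℝ) (g : ℕ → ℝ) : ℕ → ℝ
  | 0 => b
  | i + 1 => min (charge B b g i + g i) B

/-- The traversal of the path with `n` arcs is feasible from initial charge `b`. -/
def Feasible (B b : ℝ) (g : ℕ → ℝ) (n : ℕ) : Prop :=
  ∀ i < n, 0 ≤ charge B b g i + g i

open Classical in
/-- Maximum final charge `α_b(P)` for a path `P` with `n` arc gains `g`,
as an extended real (`⊥ = -∞` if the traversal is infeasible). -/
def alpha (B b : ℝ) (g : ℕ → ℝ) (n : ℕ) : EReal :=
  if Feasible B b g n then ((charge B b g n : ℝ) : EReal) else ⊥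

/-- Gain of the `i`-th vertex (0-indexed): the sum of the first `i` arc gains. -/
def vGain (g : ℕ → ℝ) (i : ℕ) : ℝ := ∑ t ∈ Finset.range i, g t

/-- `P` is traversable: `α_B(P) ≥ 0`, i.e. feasible from a full battery. -/
def Traversable (B : ℝ) (g : ℕ → ℝ) (n : ℕ) : Prop := Feasible B B g n

/-- `C` is a charge drop schedule for a path with `n` arcs (vertices `0,…,n`):
no drop at the first vertex, all drops nonnegative. -/
def Schedule (C : ℕ → ℝ) (n : ℕ) : Prop := C 0 = 0 ∧ ∀ i ≤ n, 0 ≤ C i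

/-- Gain of vertex `i` with respect to the charge drop schedule `C`. -/
def cGain (g C : ℕ → ℝ) (i : ℕ) : ℝ := vGain g i - ∑ t ∈ Finset.range (i + 1), C t

/-- `P` (with `n` arcs) is ascending with respect to the schedule `C`. -/
def AscendingC (B : ℝ) (g C : ℕ → ℝ) (n : ℕ) : Prop :=
  Traversable B g n ∧ ∀ i ≤ n, 0 ≤ cGain g C i ∧ cGain g C i ≤ cGain g C n

/-- `P` (with `n` arcs) is descending with respect to the schedule `C`. -/
def DescendingC (B : ℝ) (g C : ℕ → ℝ) (n : ℕ) : Prop :=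
  Traversable B g n ∧ ∀ i ≤ n, cGain g C n ≤ cGain g C i ∧ cGain g C i ≤ 0

/-- `P` is monotone with respect to the schedule `C`. -/
def MonotoneC (B : ℝ) (g C : ℕ → ℝ) (n : ℕ) : Prop :=
  AscendingC B g C n ∨ DescendingC B g C n

/-- Ascending with respect to the zero schedule. -/
def Ascending (B : ℝ) (g : ℕ → ℝ) (n : ℕ) : Prop := AscendingC B g (fun _ => 0) n

/-- Descending with respect to the zero schedule. -/
def Descending (B : ℝ) (g : ℕ → ℝ) (n : ℕ) : Prop := DescendingC B g (fun _ => 0) n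

/-- Monotone with respect to the zero schedule. -/
def MonotonePath (B : ℝ) (g : ℕ → ℝ) (n : ℕ) : Prop := Ascending B g n ∨ Descending B g n

/-- The contiguous subpath whose arcs start at arc index `a`. -/
def SubPath (g : ℕ → ℝ) (a : ℕ) : ℕ → ℝ := fun t => g (a + t)

/-- Restriction of a charge drop schedule to the subpath starting at vertex `a`:
no drop at the subpath's first vertex. -/
def restrict (C : ℕ → ℝ) (a : ℕ) : ℕ → ℝ := fun t => if t = 0 then 0 else C (a + t)

/-- First-arc-bounded with respect to a schedule `C` (no drop at the second vertex,
and all vertex gains lie between the gains of the first two vertices). -/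
def FirstArcBoundedC (g C : ℕ → ℝ) (n : ℕ) : Prop :=
  C 1 = 0 ∧
    ((0 ≤ g 0 ∧ ∀ i ≤ n, 0 ≤ cGain g C i ∧ cGain g C i ≤ g 0) ∨
     (g 0 ≤ 0 ∧ ∀ i ≤ n, g 0 ≤ cGain g C i ∧ cGain g C i ≤ 0))

/-- Last-arc-bounded with respect to a schedule `C` (no drops at the last two vertices,
and all vertex gains lie between the gains of the last two vertices). -/
def LastArcBoundedC (g C : ℕ → ℝ) (n : ℕ) : Prop :=
  C (n - 1) = 0 ∧ C n = 0 ∧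
    ((0 ≤ g (n - 1) ∧ ∀ i ≤ n, cGain g C (n - 1) ≤ cGain g C i ∧ cGain g C i ≤ cGain g C n) ∨
     (g (n - 1) < 0 ∧ ∀ i ≤ n, cGain g C n ≤ cGain g C i ∧ cGain g C i ≤ cGain g C (n - 1)))

/-- First-arc-bounded (zero schedule). -/
def FirstArcBounded (g : ℕ → ℝ) (n : ℕ) : Prop := FirstArcBoundedC g (fun _ => 0) n

/-- Last-arc-bounded (zero schedule). -/
def LastArcBounded (g : ℕ → ℝ) (n : ℕ) : Prop := LastArcBoundedC g (fun _ => 0) n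

/-- Arc-bounded: first- or last-arc-bounded. -/
def ArcBounded (g : ℕ → ℝ) (n : ℕ) : Prop := FirstArcBounded g n ∨ LastArcBounded g n

/-- A funnel: arc-bounded and containing no monotone subpath of 2 or 3 consecutive arcs. -/
def Funnel (B : ℝ) (g : ℕ → ℝ) (n : ℕ) : Prop :=
  ArcBounded g n ∧ ∀ a m, (m = 2 ∨ m = 3) → a + m ≤ n → ¬ MonotonePath B (SubPath g a) m

/-- `j = s̄(i)`: the maximal index `j ≥ i` (among arcs of a path with `n` arcs) such that
the subpath of arcs `i,…,j` is first-arc-bounded. -/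
def IsSbar (g : ℕ → ℝ) (n i j : ℕ) : Prop :=
  i ≤ j ∧ j < n ∧ FirstArcBounded (SubPath g i) (j - i + 1) ∧
    ∀ j', i ≤ j' → j' < n → FirstArcBounded (SubPath g i) (j' - i + 1) → j' ≤ j

/-- `j = s̲(i)`: the minimal index `j ≤ i` such that the subpath of arcs `j,…,i`
is last-arc-bounded. -/
def IsSlow (g : ℕ → ℝ) (n i j : ℕ) : Prop :=
  j ≤ i ∧ i < n ∧ LastArcBounded (SubPath g j) (i - j + 1) ∧
    ∀ j', j' ≤ i → LastArcBounded (SubPath g j') (i - j' + 1) → j ≤ j'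

/-- Arc gains of the walk around a cycle with `m` arc gains `g`, starting at vertex `a`. -/
def cyc (g : ℕ → ℝ) (m a : ℕ) : ℕ → ℝ := fun t => g ((a + t) % m)

/-- A walk of length `ℓ` from `x` to `y` in the directed graph with arc relation `A`. -/
def IsWalk {V : Type*} (A : V → V → Prop) (w : ℕ → V) (ℓ : ℕ) (x y : V) : Prop :=
  w 0 = x ∧ w ℓ = y ∧ ∀ t < ℓ, A (w t) (w (t + 1))

/-- The sequence of arc gains induced by a walk `w` in a graph with gain function `g`. -/
def walkGains {V : Type*} (g : V → V → ℝ) (w : ℕ → V) : ℕ → ℝ :=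
  fun t => g (w t) (w (t + 1))


-- ===== auxiliary lemmas =====

lemma cGainZ (g : ℕ → ℝ) (i : ℕ) : cGain g (fun _ => 0) i = vGain g i := by
  simp [cGain]

lemma vGain_succ (g : ℕ → ℝ) (i : ℕ) : vGain g (i + 1) = vGain g i + g i :=
  Finset.sum_range_succ g i

lemma vGain_zero (g : ℕ → ℝ) : vGain g 0 = 0 := by simp [vGain]

lemma vGain_sub (g : ℕ → ℝ) (a t : ℕ) :
    vGain (SubPath g a) t = vGain g (a + t) - vGain g a := by
  induction t with
  | zero => simp [vGain]
  | succ t ih =>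
    have e : a + (t + 1) = (a + t) + 1 := rfl
    rw [vGain_succ, ih, e, vGain_succ]
    simp [SubPath]
    ring

lemma asc2_iff (B : ℝ) (hB : 0 ≤ B) (h : ℕ → ℝ) :
    Ascending B h 2 ↔ 0 ≤ h 0 ∧ 0 ≤ h 1 := by
  have v1 : vGain h 1 = h 0 := by simp [vGain]
  have v2 : vGain h 2 = h 0 + h 1 := by simp [vGain, Finset.sum_range_succ]
  unfold Ascending AscendingC Traversable Feasible
  simp only [cGainZ]
  constructor
  · rintro ⟨hf, hb⟩
    have := hb 1 (by norm_num)
    rw [v1, v2] at this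
    exact ⟨this.1, by linarith [this.2]⟩
  · rintro ⟨h0, h1⟩
    refine ⟨?_, ?_⟩
    · intro i hi; interval_cases i
      · show 0 ≤ B + h 0; linarith
      · show 0 ≤ min (B + h 0) B + h 1
        have : (0:ℝ) ≤ min (B + h 0) B := le_min (by linarith) hB
        linarith
    · intro i hi; interval_cases i <;>
        simp only [v1, v2, vGain_zero] <;> constructor <;> linarith

lemma desc2_iff (B : ℝ) (h : ℕ → ℝ) :
    Descending B h 2 ↔ h 0 ≤ 0 ∧ h 1 ≤ 0 ∧ -B ≤ h 0 ∧ -B ≤ h 0 + h 1 := by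
  have v1 : vGain h 1 = h 0 := by simp [vGain]
  have v2 : vGain h 2 = h 0 + h 1 := by simp [vGain, Finset.sum_range_succ]
  unfold Descending DescendingC Traversable Feasible
  simp only [cGainZ]
  constructor
  · rintro ⟨hf, hb⟩
    have b1 := hb 1 (by norm_num)
    rw [v1, v2] at b1
    have f0 := hf 0 (by norm_num)
    have f1 := hf 1 (by norm_num)
    rw [show charge B B h 0 = B from rfl] at f0
    rw [show charge B B h 1 = min (B + h 0) B from rfl] at f1
    have hm : min (B + h 0) B = B + h 0 := min_eq_left (by linarith [b1.2])
    rw [hm] at f1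
    exact ⟨b1.2, by linarith [b1.1], by linarith, by linarith⟩
  · rintro ⟨h0, h1, hb0, hb01⟩
    refine ⟨?_, ?_⟩
    · intro i hi; interval_cases i
      · show 0 ≤ B + h 0; linarith
      · show 0 ≤ min (B + h 0) B + h 1
        rw [min_eq_left (by linarith)]; linarith
    · intro i hi; interval_cases i <;>
        simp only [v1, v2, vGain_zero] <;> constructor <;> linarith

lemma asc3_iff (B : ℝ) (hB : 0 ≤ B) (h : ℕ → ℝ) :
    Ascending B h 3 ↔
      0 ≤ h 0 ∧ 0 ≤ h 2 ∧ 0 ≤ h 0 + h 1 ∧ 0 ≤ h 1 + h 2 ∧ -B ≤ h 1 := by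
  have v1 : vGain h 1 = h 0 := by simp [vGain]
  have v2 : vGain h 2 = h 0 + h 1 := by simp [vGain, Finset.sum_range_succ]
  have v3 : vGain h 3 = h 0 + h 1 + h 2 := by simp [vGain, Finset.sum_range_succ]
  unfold Ascending AscendingC Traversable Feasible
  simp only [cGainZ]
  constructor
  · rintro ⟨hf, hb⟩
    have b1 := hb 1 (by norm_num); rw [v1, v3] at b1
    have b2 := hb 2 (by norm_num); rw [v2, v3] at b2
    have f1 := hf 1 (by norm_num)
    rw [show charge B B h 1 = min (B + h 0) B from rfl] at f1
    have : min (B + h 0) B ≤ B := min_le_right _ _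
    exact ⟨b1.1, by linarith [b2.2], b2.1, by linarith [b1.2], by linarith⟩
  · rintro ⟨h0, h2, h01, h12, hb1⟩
    refine ⟨?_, ?_⟩
    · intro i hi; interval_cases i
      · show 0 ≤ B + h 0; linarith
      · show 0 ≤ min (B + h 0) B + h 1
        rw [min_eq_right (by linarith)]; linarith
      · show 0 ≤ min (min (B + h 0) B + h 1) B + h 2
        have e1 : min (B + h 0) B = B := min_eq_right (by linarith)
        rw [e1]
        rcases min_cases (B + h 1) B with ⟨e, _⟩ | ⟨e, _⟩ <;> rw [e] <;> linarith
    · intro i hi; interval_cases i <;>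
        simp only [v1, v2, v3, vGain_zero] <;> constructor <;> linarith

lemma desc3_iff (B : ℝ) (h : ℕ → ℝ) :
    Descending B h 3 ↔
      h 0 ≤ 0 ∧ h 2 ≤ 0 ∧ h 0 + h 1 ≤ 0 ∧ h 1 + h 2 ≤ 0 ∧
        -B ≤ h 0 ∧ -B ≤ h 0 + h 1 ∧ -B ≤ h 0 + h 1 + h 2 := by
  have v1 : vGain h 1 = h 0 := by simp [vGain]
  have v2 : vGain h 2 = h 0 + h 1 := by simp [vGain, Finset.sum_range_succ]
  have v3 : vGain h 3 = h 0 + h 1 + h 2 := by simp [vGain, Finset.sum_range_succ]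
  unfold Descending DescendingC Traversable Feasible
  simp only [cGainZ]
  constructor
  · rintro ⟨hf, hb⟩
    have b1 := hb 1 (by norm_num); rw [v1, v3] at b1
    have b2 := hb 2 (by norm_num); rw [v2, v3] at b2
    have b3 := hb 3 (by norm_num); rw [v3] at b3
    have f0 := hf 0 (by norm_num)
    rw [show charge B B h 0 = B from rfl] at f0
    have e1 : min (B + h 0) B = B + h 0 := min_eq_left (by linarith [b1.2])
    have f1 := hf 1 (by norm_num)
    rw [show charge B B h 1 = min (B + h 0) B from rfl, e1] at f1
    have f2 := hf 2 (by norm_num)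
    rw [show charge B B h 2 = min (charge B B h 1 + h 1) B from rfl,
      show charge B B h 1 = min (B + h 0) B from rfl, e1] at f2
    have e2 : min (B + h 0 + h 1) B = B + h 0 + h 1 :=
      min_eq_left (by linarith [b2.2])
    rw [e2] at f2
    exact ⟨b1.2, by linarith [b2.1, b3.2], b2.2, by linarith [b3.1, b1.2],
      by linarith, by linarith, by linarith⟩
  · rintro ⟨h0, h2, h01, h12, d0, d01, d012⟩
    refine ⟨?_, ?_⟩
    · intro i hi; interval_cases i
      · show 0 ≤ B + h 0; linarith
      · show 0 ≤ min (B + h 0) B + h 1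
        rw [min_eq_left (by linarith)]; linarith
      · show 0 ≤ min (min (B + h 0) B + h 1) B + h 2
        have e1 : min (B + h 0) B = B + h 0 := min_eq_left (by linarith)
        rw [e1]
        have e2 : min (B + h 0 + h 1) B = B + h 0 + h 1 :=
          min_eq_left (by linarith)
        rw [e2]; linarith
    · intro i hi; interval_cases i <;>
        simp only [v1, v2, v3, vGain_zero] <;> constructor <;> linarith


lemma fab_iff (g : ℕ → ℝ) (n : ℕ) :
    FirstArcBounded g n ↔
      (0 ≤ g 0 ∧ ∀ i ≤ n, 0 ≤ vGain g i ∧ vGain g i ≤ g 0) ∨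
      (g 0 ≤ 0 ∧ ∀ i ≤ n, g 0 ≤ vGain g i ∧ vGain g i ≤ 0) := by
  unfold FirstArcBounded FirstArcBoundedC
  simp only [cGainZ]
  constructor
  · rintro ⟨-, hx⟩; exact hx
  · intro hx; exact ⟨trivial, hx⟩

lemma lab_iff (g : ℕ → ℝ) (n : ℕ) :
    LastArcBounded g n ↔
      (0 ≤ g (n-1) ∧ ∀ i ≤ n, vGain g (n-1) ≤ vGain g i ∧ vGain g i ≤ vGain g n) ∨
      (g (n-1) < 0 ∧ ∀ i ≤ n, vGain g n ≤ vGain g i ∧ vGain g i ≤ vGain g (n-1)) := by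
  unfold LastArcBounded LastArcBoundedC
  simp only [cGainZ]
  constructor
  · rintro ⟨-, -, hx⟩; exact hx
  · intro hx; exact ⟨trivial, trivial, hx⟩

lemma window_of_arcBounded (B : ℝ) (g : ℕ → ℝ) (n : ℕ) (hn : 1 ≤ n)
    (hrange : ∀ i < n, |g i| ≤ B) (hab : ArcBounded g n) :
    ∀ i ≤ n, ∀ j ≤ n, -B ≤ vGain g j - vGain g i := by
  intro i hi j hj
  rcases hab with hfab | hlab
  · have h0 := abs_le.mp (hrange 0 (by omega))
    rcases (fab_iff g n).1 hfab with ⟨h0', hbd⟩ | ⟨h0', hbd⟩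
    · have a1 := hbd i hi; have a2 := hbd j hj
      linarith [a1.1, a1.2, a2.1, a2.2, h0.1, h0.2]
    · have a1 := hbd i hi; have a2 := hbd j hj
      linarith [a1.1, a1.2, a2.1, a2.2, h0.1, h0.2]
  · have hl := abs_le.mp (hrange (n-1) (by omega))
    have en : vGain g n = vGain g (n-1) + g (n-1) := by
      have e := vGain_succ g (n-1)
      rwa [show n - 1 + 1 = n from by omega] at e
    rcases (lab_iff g n).1 hlab with ⟨h0', hbd⟩ | ⟨h0', hbd⟩
    · have a1 := hbd i hi; have a2 := hbd j hj
      linarith [a1.1, a1.2, a2.1, a2.2, hl.1, hl.2]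
    · have a1 := hbd i hi; have a2 := hbd j hj
      linarith [a1.1, a1.2, a2.1, a2.2, hl.1, hl.2]

set_option maxHeartbeats 1600000 in
/-- Characterization of funnels (arc-indexed path `e_0 … e_{n-1}`, all gains
in `[-B,B]`): a funnel iff arc gains are nonzero with alternating signs, and either the
path is first-arc-bounded with `|g 0| ≥ |g 1| > |g 2| > … > |g (n-1)| > 0`, or it is
last-arc-bounded with `|g (n-1)| ≥ |g (n-2)| > … > |g 0| > 0`. -/
theorem funnel_iff (B : ℝ) (hB : 0 < B) (g : ℕ → ℝ) (n : ℕ) (hn : 2 ≤ n)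
    (hrange : ∀ i < n, |g i| ≤ B) :
    Funnel B g n ↔
      ((∀ i < n, g i ≠ 0 ∧ Real.sign (g i) = (-1 : ℝ) ^ i * Real.sign (g 0)) ∧
        ((FirstArcBounded g n ∧ |g 1| ≤ |g 0| ∧
            (∀ i, 1 ≤ i → i + 1 < n → |g (i + 1)| < |g i|) ∧ 0 < |g (n - 1)|) ∨
         (LastArcBounded g n ∧ |g (n - 2)| ≤ |g (n - 1)| ∧
            (∀ i, i + 2 < n → |g i| < |g (i + 1)|) ∧ 0 < |g 0|))) := by
  obtain ⟨m, rfl⟩ : ∃ m, n = m + 2 := ⟨n - 2, by omega⟩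
  have e1 : m + 2 - 1 = m + 1 := by omega
  have e2 : m + 2 - 2 = m := by omega
  have habs : ∀ i < m + 2, -B ≤ g i ∧ g i ≤ B := fun i hi => abs_le.mp (hrange i hi)
  constructor
  · rintro ⟨hab, hmono⟩
    have hwin := window_of_arcBounded B g (m+2) (by omega) hrange hab
    have hwin2 : ∀ a, a + 2 ≤ m + 2 → -B ≤ g a + g (a+1) := by
      intro a ha
      have h := hwin a (by omega) (a+2) (by omega)
      rw [show a+2 = (a+1)+1 from rfl, vGain_succ, vGain_succ] at h
      linarith
    have hwin3 : ∀ a, a + 3 ≤ m + 2 → -B ≤ g a + g (a+1) + g (a+2) := by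
      intro a ha
      have h := hwin a (by omega) (a+3) (by omega)
      rw [show a+3 = ((a+1)+1)+1 from rfl, vGain_succ, vGain_succ, vGain_succ] at h
      linarith
    have hopp : ∀ a, a + 1 < m + 2 → g a * g (a+1) < 0 := by
      intro a ha
      by_contra hc
      push_neg at hc
      have hm2 := hmono a 2 (Or.inl rfl) (by omega)
      have s0 : SubPath g a 0 = g a := by simp [SubPath]
      have s1 : SubPath g a 1 = g (a+1) := rfl
      apply hm2
      rcases le_or_gt 0 (g a) with hx | hx
      · rcases le_or_gt 0 (g (a+1)) with hy | hy
        · refine Or.inl ((asc2_iff B hB.le _).2 ?_)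
          rw [s0, s1]; exact ⟨hx, hy⟩
        · have hx0 : g a = 0 := by nlinarith
          refine Or.inr ((desc2_iff B _).2 ?_)
          rw [s0, s1]
          exact ⟨le_of_eq hx0, hy.le, (habs a (by omega)).1, by
            have := hwin2 a (by omega); linarith⟩
      · rcases le_or_gt 0 (g (a+1)) with hy | hy
        · have hy0 : g (a+1) = 0 := by nlinarith
          refine Or.inr ((desc2_iff B _).2 ?_)
          rw [s0, s1]
          exact ⟨hx.le, le_of_eq hy0, (habs a (by omega)).1, by
            have := hwin2 a (by omega); linarith⟩
        · refine Or.inr ((desc2_iff B _).2 ?_)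
          rw [s0, s1]
          exact ⟨hx.le, hy.le, (habs a (by omega)).1, by
            have := hwin2 a (by omega); linarith⟩
    have hne : ∀ i < m + 2, g i ≠ 0 := by
      intro i hi h0
      rcases lt_or_ge (i+1) (m+2) with h | h
      · have := hopp i h; rw [h0] at this; simp at this
      · have hi' : i = m + 1 := by omega
        have := hopp m (by omega)
        rw [show m + 1 = i from hi'.symm, h0] at this; simp at this
    have hsign : ∀ i < m + 2, Real.sign (g i) = (-1 : ℝ) ^ i * Real.sign (g 0) := by
      intro i
      induction i with
      | zero => intro _; simp
      | succ k ih =>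
        intro hk
        have ho := hopp k (by omega)
        have hs : Real.sign (g (k+1)) = - Real.sign (g k) := by
          rcases lt_trichotomy (g k) 0 with h|h|h
          · have h2 : 0 < g (k+1) := by nlinarith
            rw [Real.sign_of_pos h2, Real.sign_of_neg h]; ring
          · rw [h] at ho; simp at ho
          · have h2 : g (k+1) < 0 := by nlinarith
            rw [Real.sign_of_neg h2, Real.sign_of_pos h]
        rw [hs, ih (by omega), pow_succ]; ring
    have notMin : ∀ a, a + 3 ≤ m + 2 → |g (a+1)| ≤ |g a| → |g (a+1)| ≤ |g (a+2)| →
        False := by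
      intro a ha hl hr
      have hxy := hopp a (by omega)
      have hyz := hopp (a+1) (by omega)
      have hm3 := hmono a 3 (Or.inr rfl) (by omega)
      apply hm3
      have s0 : SubPath g a 0 = g a := by simp [SubPath]
      have s1 : SubPath g a 1 = g (a+1) := rfl
      have s2 : SubPath g a 2 = g (a+2) := rfl
      rcases lt_trichotomy (g a) 0 with hx|hx|hx
      · have hy : 0 < g (a+1) := by nlinarith
        have hz : g (a+2) < 0 := by nlinarith
        refine Or.inr ((desc3_iff B _).2 ?_)
        rw [s0, s1, s2]
        rw [abs_of_neg hx, abs_of_pos hy] at hl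
        rw [abs_of_pos hy, abs_of_neg hz] at hr
        exact ⟨hx.le, hz.le, by linarith, by linarith,
          (habs a (by omega)).1, hwin2 a (by omega), hwin3 a ha⟩
      · exact absurd hxy (by rw [hx]; simp)
      · have hy : g (a+1) < 0 := by nlinarith
        have hz : 0 < g (a+2) := by nlinarith
        refine Or.inl ((asc3_iff B hB.le _).2 ?_)
        rw [s0, s1, s2]
        rw [abs_of_pos hx, abs_of_neg hy] at hl
        rw [abs_of_neg hy, abs_of_pos hz] at hr
        exact ⟨hx.le, hz.le, by linarith, by linarith, (habs (a+1) (by omega)).1⟩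
    refine ⟨fun i hi => ⟨hne i hi, hsign i hi⟩, ?_⟩
    have v2eq : vGain g 2 = g 0 + g 1 := by
      simp [vGain, Finset.sum_range_succ]
    rcases hab with hfab | hlab
    · left
      have h10 : |g 1| ≤ |g 0| := by
        rcases (fab_iff g (m+2)).1 hfab with ⟨h0, hbd⟩ | ⟨h0, hbd⟩
        · have h0' : 0 < g 0 := lt_of_le_of_ne h0 (Ne.symm (hne 0 (by omega)))
          have h1' : g 1 < 0 := by nlinarith [hopp 0 (by omega)]
          have hv := (hbd 2 (by omega)).1
          rw [v2eq] at hv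
          rw [abs_of_pos h0', abs_of_neg h1']; linarith
        · have h0' : g 0 < 0 := lt_of_le_of_ne h0 (hne 0 (by omega))
          have h1' : 0 < g 1 := by nlinarith [hopp 0 (by omega)]
          have hv := (hbd 2 (by omega)).2
          rw [v2eq] at hv
          rw [abs_of_neg h0', abs_of_pos h1']; linarith
      have hchain : ∀ i, 1 ≤ i → i + 1 < m + 2 → |g (i+1)| < |g i| := by
        intro i
        induction i with
        | zero => intro h; omega
        | succ k ih =>
          intro _ hlt
          rcases Nat.eq_zero_or_pos k with rfl | hk
          · by_contra hcon
            push_neg at hcon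
            exact notMin 0 (by omega) h10 hcon
          · by_contra hcon
            push_neg at hcon
            have hkk := ih (by omega) (by omega)
            exact notMin k (by omega) hkk.le hcon
      refine ⟨hfab, h10, hchain, ?_⟩
      rw [e1]
      exact abs_pos.2 (hne (m+1) (by omega))
    · right
      have vm2 : vGain g (m+2) = vGain g (m+1) + g (m+1) := vGain_succ g (m+1)
      have vm1 : vGain g (m+1) = vGain g m + g m := vGain_succ g m
      have hanchor : |g m| ≤ |g (m+1)| := by
        have hlab' := (lab_iff g (m+2)).1 hlab
        rw [e1] at hlab'
        rcases hlab' with ⟨h0, hbd⟩ | ⟨h0, hbd⟩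
        · have h0' : 0 < g (m+1) := lt_of_le_of_ne h0 (Ne.symm (hne (m+1) (by omega)))
          have hm' : g m < 0 := by nlinarith [hopp m (by omega)]
          have hv1 := (hbd m (by omega)).1
          have hv2 := (hbd m (by omega)).2
          rw [vm1] at hv1
          rw [vm2, vm1] at hv2
          rw [abs_of_neg hm', abs_of_pos h0']; linarith
        · have hm' : 0 < g m := by nlinarith [hopp m (by omega)]
          have hv1 := (hbd m (by omega)).1
          have hv2 := (hbd m (by omega)).2
          rw [vm2, vm1] at hv1
          rw [vm1] at hv2
          rw [abs_of_pos hm', abs_of_neg h0]; linarith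
      have key : ∀ k i, i + 3 + k = m + 2 → |g i| < |g (i+1)| := by
        intro k
        induction k with
        | zero =>
          intro i he
          by_contra hcon
          push_neg at hcon
          have h12 : |g (i+1)| ≤ |g (i+2)| := by
            have := hanchor
            rw [show m = i + 1 from by omega] at this
            exact this
          exact notMin i (by omega) hcon h12
        | succ k ih =>
          intro i he
          by_contra hcon
          push_neg at hcon
          have h12 := ih (i+1) (by omega)
          exact notMin i (by omega) hcon h12.le
      refine ⟨hlab, ?_, fun i hi => key (m + 2 - (i + 3)) i (by omega), ?_⟩
      · rw [e1, e2]; exact hanchor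
      · exact abs_pos.2 (hne 0 (by omega))
  · rintro ⟨hsig, hcase⟩
    have hne : ∀ i < m + 2, g i ≠ 0 := fun i hi => (hsig i hi).1
    have hopp : ∀ a, a + 1 < m + 2 → g a * g (a+1) < 0 := by
      intro a ha
      have s1 := (hsig a (by omega)).2
      have s2 := (hsig (a+1) (by omega)).2
      have hs : Real.sign (g (a+1)) = - Real.sign (g a) := by
        rw [s1, s2, pow_succ]; ring
      rcases lt_trichotomy (g a) 0 with hx|hx|hx
      · rcases lt_trichotomy (g (a+1)) 0 with hy|hy|hy
        · rw [Real.sign_of_neg hy, Real.sign_of_neg hx] at hs; norm_num at hs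
        · exact absurd hy (hne (a+1) (by omega))
        · exact mul_neg_of_neg_of_pos hx hy
      · exact absurd hx (hne a (by omega))
      · rcases lt_trichotomy (g (a+1)) 0 with hy|hy|hy
        · exact mul_neg_of_pos_of_neg hx hy
        · exact absurd hy (hne (a+1) (by omega))
        · rw [Real.sign_of_pos hy, Real.sign_of_pos hx] at hs; norm_num at hs
    constructor
    · rcases hcase with ⟨hfab,_,_,_⟩|⟨hlab,_,_,_⟩
      exacts [Or.inl hfab, Or.inr hlab]
    · intro a mm hmm ham hmono
      rcases hmm with rfl | rfl
      · have ho := hopp a (by omega)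
        rcases hmono with hA | hD
        · obtain ⟨u1, u2⟩ := (asc2_iff B hB.le _).1 hA
          simp only [SubPath, Nat.add_zero] at u1 u2
          nlinarith
        · obtain ⟨u1, u2, -, -⟩ := (desc2_iff B _).1 hD
          simp only [SubPath, Nat.add_zero] at u1 u2
          nlinarith
      · have hoxy := hopp a (by omega)
        have hoyz := hopp (a+1) (by omega)
        have habs12 : |g (a+1)| ≤ |g a| ∧ |g (a+1)| ≤ |g (a+2)| := by
          rcases hmono with hA | hD
          · obtain ⟨u0, u2, u01, u12, -⟩ := (asc3_iff B hB.le _).1 hA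
            simp only [SubPath, Nat.add_zero] at u0 u2 u01 u12
            have hx : 0 < g a := lt_of_le_of_ne u0 (Ne.symm (hne a (by omega)))
            have hy : g (a+1) < 0 := by nlinarith
            have hz : 0 < g (a+2) := by nlinarith
            rw [abs_of_pos hx, abs_of_neg hy, abs_of_pos hz]
            constructor <;> linarith
          · obtain ⟨u0, u2, u01, u12, -, -, -⟩ := (desc3_iff B _).1 hD
            simp only [SubPath, Nat.add_zero] at u0 u2 u01 u12
            have hx : g a < 0 := lt_of_le_of_ne u0 (hne a (by omega))
            have hy : 0 < g (a+1) := by nlinarith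
            have hz : g (a+2) < 0 := by nlinarith
            rw [abs_of_neg hx, abs_of_pos hy, abs_of_neg hz]
            constructor <;> linarith
        rcases hcase with ⟨-, -, hchain, -⟩ | ⟨-, -, hchain, -⟩
        · have := hchain (a+1) (by omega) (by omega)
          linarith [habs12.2]
        · have := hchain a (by omega)
          linarith [habs12.1]


end

end EV
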